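/- For every Λ ∈ (0,1) there is a constant C > 0 such that for all ε ∈ (0,1], all real N with Λ/(2ε) < N ≤ 1/(2ε), all t ≥ 0 and all z ∈ ℝ², | ∑_{n ∈ ℤ², Λ/(2ε) < ⟨n⟩ ≤ N} ε^{−4} ∫₀ᵗ e^{−s/ε²} · s² · φ( s²·λ_ε(⟨n⟩)² )² ds · e^{i n·z} | ≤ C, where λ_ε(r) = √(1−4ε²r²)/(2ε²) and φ(x) = ∑_{j=0}^∞ x^j/(2j+1)!, so that s²·φ(s²λ²)² = (sinh(sλ)/λ)² whenever λ > 0. -/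

import Mathlib

/-- The entire function `φ(x) = ∑_{j=0}^∞ x^j/(2j+1)!`. -/
noncomputable def phi (x : ℝ) : ℝ := ∑' j : ℕ, x ^ j / (Nat.factorial (2 * j + 1) : ℝ)

/-- The low-frequency damped-wave rate `λ_ε(r) = √(1−4ε²r²)/(2ε²)`. -/
noncomputable def lam (ε r : ℝ) : ℝ := Real.sqrt (1 - 4 * ε ^ 2 * r ^ 2) / (2 * ε ^ 2)

/-- The Japanese bracket `⟨n⟩ = (1+|n|²)^{1/2}` of a lattice point `n ∈ ℤ²`. -/
noncomputable def jb (n : ℤ × ℤ) : ℝ :=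
  Real.sqrt (1 + ((n.1 : ℝ) ^ 2 + (n.2 : ℝ) ^ 2))

/-- The pairing `n·z` of a lattice point with `z ∈ ℝ²`. -/
def dotZ (n : ℤ × ℤ) (z : ℝ × ℝ) : ℝ := (n.1 : ℝ) * z.1 + (n.2 : ℝ) * z.2

lemma phi_nonneg {x : ℝ} (hx : 0 ≤ x) : 0 ≤ phi x :=
  tsum_nonneg fun j => by positivity

lemma phi_sq_le_exp {y : ℝ} (hy : 0 ≤ y) : phi (y ^ 2) ≤ Real.exp y := by
  have hg : Summable (fun n : ℕ => y ^ n / (Nat.factorial n : ℝ)) :=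
    Real.summable_pow_div_factorial y
  have hinj : Function.Injective (fun j : ℕ => 2 * j) := fun a b h => by simpa using h
  have hgc : Summable (fun j : ℕ => y ^ (2 * j) / (Nat.factorial (2 * j) : ℝ)) :=
    hg.comp_injective hinj
  have hexp : Real.exp y = ∑' n : ℕ, y ^ n / (Nat.factorial n : ℝ) := by
    rw [Real.exp_eq_exp_ℝ, NormedSpace.exp_eq_tsum_div]
  have hterm : ∀ j : ℕ, (y ^ 2) ^ j / (Nat.factorial (2 * j + 1) : ℝ)
      ≤ y ^ (2 * j) / (Nat.factorial (2 * j) : ℝ) := by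
    intro j
    rw [← pow_mul]
    exact div_le_div_of_nonneg_left (by positivity) (by positivity)
      (by exact_mod_cast Nat.factorial_le (by omega))
  have hfs : Summable (fun j : ℕ => (y ^ 2) ^ j / (Nat.factorial (2 * j + 1) : ℝ)) :=
    hgc.of_nonneg_of_le (fun j => by positivity) hterm
  calc phi (y ^ 2) ≤ ∑' j : ℕ, y ^ (2 * j) / (Nat.factorial (2 * j) : ℝ) :=
        Summable.tsum_le_tsum hterm hfs hgc
    _ ≤ ∑' n : ℕ, y ^ n / (Nat.factorial n : ℝ) :=
        Summable.tsum_le_tsum_of_inj _ hinj (fun n _ => by positivity) (fun j => le_rfl) hgc hg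
    _ = Real.exp y := hexp.symm

lemma integral_sq_exp_le {a : ℝ} (ha : 0 < a) {t : ℝ} (ht : 0 ≤ t) :
    (∫ s in (0:ℝ)..t, s ^ 2 * Real.exp (-(a * s))) ≤ 2 / a ^ 3 := by
  have key : ∀ s : ℝ, HasDerivAt
      (fun u : ℝ => -((u ^ 2 * a ^ 2 + 2 * u * a + 2) / a ^ 3) * Real.exp (-(a * u)))
      (s ^ 2 * Real.exp (-(a * s))) s := by
    intro s
    have h1 : HasDerivAt (fun u : ℝ => -(a * u)) (-a) s := by
      simpa using (hasDerivAt_id s).const_mul (-a)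
    have hexp : HasDerivAt (fun u : ℝ => Real.exp (-(a * u)))
        (Real.exp (-(a * s)) * (-a)) s := (Real.hasDerivAt_exp _).comp s h1
    have hpoly : HasDerivAt (fun u : ℝ => -((u ^ 2 * a ^ 2 + 2 * u * a + 2) / a ^ 3))
        (-((2 * s * a ^ 2 + 2 * a) / a ^ 3)) s := by
      have : HasDerivAt (fun u : ℝ => u ^ 2 * a ^ 2 + 2 * u * a + 2)
          (2 * s * a ^ 2 + 2 * a) s := by
        have h2 : HasDerivAt (fun u : ℝ => u ^ 2) (2 * s) s := by
          simpa using hasDerivAt_pow 2 s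
        simpa [mul_comm] using ((h2.mul_const (a ^ 2)).add
          (((hasDerivAt_id s).const_mul 2).mul_const a)).add_const 2
      exact (this.div_const (a ^ 3)).neg
    have := hpoly.mul hexp
    refine this.congr_deriv ?_
    field_simp
    ring
  have hcont : Continuous fun s : ℝ => s ^ 2 * Real.exp (-(a * s)) := by continuity
  rw [intervalIntegral.integral_eq_sub_of_hasDerivAt (fun s _ => key s)
    (hcont.intervalIntegrable 0 t)]
  have h0 : (0:ℝ) ≤ (t ^ 2 * a ^ 2 + 2 * t * a + 2) / a ^ 3 * Real.exp (-(a * t)) := by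
    positivity
  rw [show -(a * (0:ℝ)) = 0 by ring, Real.exp_zero]
  norm_num
  linarith [h0]


set_option maxHeartbeats 1000000 in
/-- For every `Λ ∈ (0,1)` there is `C > 0` such that for all `ε ∈ (0,1]`,
`Λ/(2ε) < N ≤ 1/(2ε)`, `t ≥ 0` and `z ∈ ℝ²`, the contribution of the frequency window
`Λ/(2ε) < ⟨n⟩ ≤ N` to the damped-wave covariance function is bounded by `C`. -/
theorem dampedWave_covariance_window_bound (Λ : ℝ) (hΛ : Λ ∈ Set.Ioo (0:ℝ) 1) :
    ∃ C : ℝ, 0 < C ∧ ∀ (ε N t : ℝ) (z : ℝ × ℝ), ε ∈ Set.Ioc (0:ℝ) 1 →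
      Λ / (2 * ε) < N → N ≤ 1 / (2 * ε) → 0 ≤ t →
      ‖(∑' n : ℤ × ℤ,
        if Λ / (2 * ε) < jb n ∧ jb n ≤ N then
          (((∫ s in (0:ℝ)..t,
              Real.exp (-s / ε ^ 2) * s ^ 2 * (phi (s ^ 2 * lam ε (jb n) ^ 2)) ^ 2) / ε ^ 4
              : ℝ) : ℂ) *
            Complex.exp (Complex.I * ((dotZ n z : ℝ) : ℂ))
        else 0)‖ ≤ C := by
  obtain ⟨hΛ0, hΛ1⟩ := hΛ
  set c : ℝ := 1 - Real.sqrt (1 - Λ ^ 2) with hc_def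
  have hΛsq : 0 ≤ 1 - Λ ^ 2 := by nlinarith
  have hsqlt : Real.sqrt (1 - Λ ^ 2) < 1 := by
    have := Real.sqrt_lt_sqrt hΛsq (show 1 - Λ ^ 2 < 1 by nlinarith)
    rwa [Real.sqrt_one] at this
  have hc : 0 < c := by simp only [hc_def]; linarith
  refine ⟨8 / c ^ 3, by positivity, ?_⟩
  intro ε N t z hε hN1 hN2 ht
  obtain ⟨hε0, hε1⟩ := hε
  set f : ℤ × ℤ → ℂ := fun n =>
    if Λ / (2 * ε) < jb n ∧ jb n ≤ N then
      (((∫ s in (0:ℝ)..t,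
          Real.exp (-s / ε ^ 2) * s ^ 2 * (phi (s ^ 2 * lam ε (jb n) ^ 2)) ^ 2) / ε ^ 4
          : ℝ) : ℂ) *
        Complex.exp (Complex.I * ((dotZ n z : ℝ) : ℂ))
    else 0 with hf_def
  clear_value f
  -- per-term bound
  have hbound : ∀ n : ℤ × ℤ, ‖f n‖ ≤ 2 * ε ^ 2 / c ^ 3 := by
    intro n
    rw [hf_def]
    by_cases hcond : Λ / (2 * ε) < jb n ∧ jb n ≤ N
    · simp only [if_pos hcond]
      set r : ℝ := jb n with hr_def
      have hr0 : 0 < r := Real.sqrt_pos.mpr (by positivity)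
      set lm : ℝ := lam ε r with hlm_def
      have hlm0 : 0 ≤ lm := by rw [hlm_def, lam]; positivity
      have h2ε : 0 < 2 * ε := by linarith
      have hΛr : Λ ≤ 2 * ε * r := by
        have h := hcond.1
        rw [div_lt_iff₀ h2ε] at h
        nlinarith
      have hlam2 : 2 * lm ≤ (1 - c) / ε ^ 2 := by
        rw [hlm_def, lam, hc_def]
        rw [show (1:ℝ) - (1 - Real.sqrt (1 - Λ ^ 2)) = Real.sqrt (1 - Λ ^ 2) by ring]
        rw [show 2 * (Real.sqrt (1 - 4 * ε ^ 2 * r ^ 2) / (2 * ε ^ 2))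
            = Real.sqrt (1 - 4 * ε ^ 2 * r ^ 2) / ε ^ 2 by ring]
        gcongr
        nlinarith
      have hle : ∀ s ∈ Set.Icc (0:ℝ) t,
          Real.exp (-s / ε ^ 2) * s ^ 2 * (phi (s ^ 2 * lm ^ 2)) ^ 2
            ≤ s ^ 2 * Real.exp (-(c / ε ^ 2 * s)) := by
        intro s hs
        have hs0 : 0 ≤ s := hs.1
        have hphi : phi (s ^ 2 * lm ^ 2) ≤ Real.exp (s * lm) := by
          rw [show s ^ 2 * lm ^ 2 = (s * lm) ^ 2 by ring]
          exact phi_sq_le_exp (by positivity)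
        have hphi2 : (phi (s ^ 2 * lm ^ 2)) ^ 2 ≤ Real.exp (s * lm) ^ 2 :=
          pow_le_pow_left₀ (phi_nonneg (by positivity)) hphi 2
        have hmul : s * lm + s * lm ≤ s * ((1 - c) / ε ^ 2) := by
          have h := mul_le_mul_of_nonneg_left hlam2 hs0
          nlinarith
        calc Real.exp (-s / ε ^ 2) * s ^ 2 * (phi (s ^ 2 * lm ^ 2)) ^ 2
            ≤ Real.exp (-s / ε ^ 2) * s ^ 2 * Real.exp (s * lm) ^ 2 := by
              apply mul_le_mul_of_nonneg_left hphi2 (by positivity)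
          _ = s ^ 2 * Real.exp (-s / ε ^ 2 + (s * lm + s * lm)) := by
              rw [Real.exp_add, Real.exp_add, sq]; ring
          _ ≤ s ^ 2 * Real.exp (-(c / ε ^ 2 * s)) := by
              gcongr
              have hkey : s * ((1 - c) / ε ^ 2) = s / ε ^ 2 - c / ε ^ 2 * s := by ring
              have hkey2 : -s / ε ^ 2 + (s / ε ^ 2 - c / ε ^ 2 * s) = -(c / ε ^ 2 * s) := by
                ring
              linarith
      have ha : (0:ℝ) < c / ε ^ 2 := by positivity
      set g : ℝ → ℝ := fun s =>
        Real.exp (-s / ε ^ 2) * s ^ 2 * (phi (s ^ 2 * lm ^ 2)) ^ 2 with hg_def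
      have hIabs : |∫ s in (0:ℝ)..t, g s| ≤ 2 * ε ^ 6 / c ^ 3 := by
        have heq : 2 / (c / ε ^ 2) ^ 3 = 2 * ε ^ 6 / c ^ 3 := by
          field_simp
        by_cases hInt : IntervalIntegrable g MeasureTheory.volume 0 t
        · have hnn : 0 ≤ ∫ s in (0:ℝ)..t, g s :=
            intervalIntegral.integral_nonneg ht (fun s hs => by rw [hg_def]; positivity)
          have hcont2 : Continuous fun s : ℝ => s ^ 2 * Real.exp (-(c / ε ^ 2 * s)) := by
            continuity
          have hup := intervalIntegral.integral_mono_on ht hInt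
            (hcont2.intervalIntegrable 0 t) hle
          rw [abs_of_nonneg hnn]
          exact hup.trans (heq ▸ integral_sq_exp_le ha ht)
        · rw [intervalIntegral.integral_undef hInt]
          simp only [abs_zero]
          positivity
      have habs : ‖((((∫ s in (0:ℝ)..t, g s) / ε ^ 4 : ℝ) : ℂ) *
          Complex.exp (Complex.I * ((dotZ n z : ℝ) : ℂ)))‖
          = |∫ s in (0:ℝ)..t, g s| / ε ^ 4 := by
        rw [norm_mul, Complex.norm_real, Complex.norm_exp]
        simp [Complex.mul_re, abs_div, abs_of_pos (pow_pos hε0 4), abs_of_pos hε0]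
      rw [habs]
      calc |∫ s in (0:ℝ)..t, g s| / ε ^ 4 ≤ (2 * ε ^ 6 / c ^ 3) / ε ^ 4 := by
            gcongr
        _ = 2 * ε ^ 2 / c ^ 3 := by field_simp
    · simp only [if_neg hcond, norm_zero]
      positivity
  -- support is finite
  obtain ⟨M, hMle, hMup⟩ : ∃ M : ℕ, (M:ℝ) ≤ 1 / (2 * ε) ∧
      ∀ k : ℕ, (k:ℝ) ≤ 1 / (2 * ε) → k ≤ M :=
    ⟨⌊1 / (2 * ε)⌋₊, Nat.floor_le (by positivity), fun k hk => Nat.le_floor hk⟩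
  set F : Finset (ℤ × ℤ) :=
    Finset.Icc (-(M:ℤ)) (M:ℤ) ×ˢ Finset.Icc (-(M:ℤ)) (M:ℤ) with hF_def
  clear_value F
  have hsupp : ∀ n : ℤ × ℤ, n ∉ F → f n = 0 := by
    intro n hn
    have hcond : ¬(Λ / (2 * ε) < jb n ∧ jb n ≤ N) := by
      intro hcond
      apply hn
      have hjb : jb n ≤ 1 / (2 * ε) := hcond.2.trans hN2
      have hmem : ∀ m : ℤ, (m:ℝ) ^ 2 ≤ (jb n) ^ 2 → m ∈ Finset.Icc (-(M:ℤ)) (M:ℤ) := by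
        intro m hm
        have hjb0 : 0 ≤ jb n := Real.sqrt_nonneg _
        have habsm : |(m:ℝ)| ≤ jb n := by
          rw [← Real.sqrt_sq_eq_abs]
          calc Real.sqrt ((m:ℝ) ^ 2) ≤ Real.sqrt ((jb n) ^ 2) := Real.sqrt_le_sqrt hm
            _ = jb n := Real.sqrt_sq hjb0
        have hna : m.natAbs ≤ M := by
          apply hMup
          rw [Nat.cast_natAbs]
          push_cast
          exact habsm.trans hjb
        rw [Finset.mem_Icc]
        omega
      have hsq : ∀ m : ℤ × ℤ, (jb m) ^ 2 = 1 + ((m.1:ℝ) ^ 2 + (m.2:ℝ) ^ 2) := by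
        intro m
        rw [jb, Real.sq_sqrt (by positivity)]
      rw [hF_def]
      refine Finset.mem_product.mpr ⟨hmem n.1 ?_, hmem n.2 ?_⟩ <;>
        rw [hsq n] <;> nlinarith [sq_nonneg ((n.1:ℝ)), sq_nonneg ((n.2:ℝ))]
    rw [hf_def]
    simp only [if_neg hcond]
  -- counting
  have hcardIcc : (Finset.Icc (-(M:ℤ)) (M:ℤ)).card = 2 * M + 1 := by
    rw [Int.card_Icc]; omega
  have hcard : F.card = (2 * M + 1) ^ 2 := by
    rw [hF_def, Finset.card_product, hcardIcc]; ring
  have h1ε : 1 ≤ 1 / ε := by rw [le_div_iff₀ hε0]; linarith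
  have hb : 2 * (M:ℝ) + 1 ≤ 2 / ε := by
    have h2 : 2 * (1 / (2 * ε)) = 1 / ε := by ring
    have h3 : 2 / ε = 1 / ε + 1 / ε := by ring
    linarith
  have hcardle : (F.card : ℝ) ≤ 4 / ε ^ 2 := by
    rw [hcard]
    push_cast
    have := pow_le_pow_left₀ (by positivity) hb 2
    calc ((2 * (M:ℝ) + 1)) ^ 2 ≤ (2 / ε) ^ 2 := this
      _ = 4 / ε ^ 2 := by ring
  calc ‖∑' n, f n‖ = ‖∑ n ∈ F, f n‖ := by rw [tsum_eq_sum hsupp]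
    _ ≤ ∑ n ∈ F, ‖f n‖ := norm_sum_le _ _
    _ ≤ F.card • (2 * ε ^ 2 / c ^ 3) := Finset.sum_le_card_nsmul _ _ _ (fun n _ => hbound n)
    _ = (F.card : ℝ) * (2 * ε ^ 2 / c ^ 3) := nsmul_eq_mul _ _
    _ ≤ (4 / ε ^ 2) * (2 * ε ^ 2 / c ^ 3) := by
        apply mul_le_mul_of_nonneg_right hcardle (by positivity)
    _ = 8 / c ^ 3 := by
        rw [show (4 / ε ^ 2) * (2 * ε ^ 2 / c ^ 3) = 8 * (ε ^ 2 / ε ^ 2) / c ^ 3 by ring,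
          div_self (by positivity : (ε:ℝ) ^ 2 ≠ 0), mul_one]
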